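/- Let f be a polymatroid rank function on a finite ground set E with |E| = n. Then there exists a point u ∈ B(f) that is 1-majorized over the polymatroid: for every y ∈ P(f) and every k ∈ {1, …, n}, Q_k(u) ≥ Q_k(y). -/

import Mathlib

/-- The independence polytope of a set function on a finite ground set. -/
def indepP {E : Type*} [Fintype E] (f : Finset E → ℝ) : Set (E → ℝ) :=
  {x | (∀ i, 0 ≤ x i) ∧ ∀ S : Finset E, ∑ i ∈ S, x i ≤ f S}

/-- The base polytope of a set function on a finite ground set. -/
def baseB {E : Type*} [Fintype E] (f : Finset E → ℝ) : Set (E → ℝ) :=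
  {x ∈ indepP f | ∑ i, x i = f Finset.univ}

/-- `Qk x k` is the sum of the `k` smallest coordinates of `x`, i.e. the least
coordinate sum over subsets of size `k`. -/
noncomputable def Qk {E : Type*} [Fintype E] (x : E → ℝ) (k : ℕ) : ℝ :=
  sInf {s : ℝ | ∃ S : Finset E, S.card = k ∧ s = ∑ i ∈ S, x i}


open Finset

open Finset

lemma count_powersetCard {E : Type*} [DecidableEq E] (D : Finset E) (r : ℕ) (hr : 1 ≤ r)
    {i : E} (hi : i ∈ D) :
    ((D.powersetCard r).filter (fun R => i ∈ R)).card = (D.card - 1).choose (r - 1) := by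
  rw [← Finset.card_erase_of_mem hi, ← Finset.card_powersetCard]
  refine Finset.card_bij' (fun R _ => R.erase i) (fun Q _ => insert i Q) ?_ ?_ ?_ ?_
  · intro R hR
    simp only [mem_filter, mem_powersetCard] at hR
    obtain ⟨⟨hRD, hRc⟩, hiR⟩ := hR
    rw [mem_powersetCard]
    exact ⟨Finset.erase_subset_erase i hRD, by rw [card_erase_of_mem hiR, hRc]⟩
  · intro Q hQ
    rw [mem_powersetCard] at hQ
    obtain ⟨hQD, hQc⟩ := hQ
    have hiQ : i ∉ Q := fun h => (Finset.notMem_erase i D) (hQD h)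
    simp only [mem_filter, mem_powersetCard]
    refine ⟨⟨?_, ?_⟩, mem_insert_self i Q⟩
    · exact insert_subset hi ((hQD.trans (erase_subset i D)))
    · rw [card_insert_of_notMem hiQ, hQc]
      omega
  · intro R hR
    simp only [mem_filter] at hR
    exact insert_erase hR.2
  · intro Q hQ
    rw [mem_powersetCard] at hQ
    exact erase_insert (fun h => (Finset.notMem_erase i D) (hQ.1 h))

lemma exists_avg_subset {E : Type*} [DecidableEq E] (D : Finset E) (r : ℕ) (hr : r ≤ D.card)
    (y : E → ℝ) : ∃ R : Finset E, R ⊆ D ∧ R.card = r ∧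
      (D.card : ℝ) * ∑ i ∈ R, y i ≤ (r : ℝ) * ∑ i ∈ D, y i := by
  rcases Nat.eq_zero_or_pos r with h0 | hpos
  · exact ⟨∅, empty_subset _, by simp [h0], by simp [h0]⟩
  have hP : (D.powersetCard r).Nonempty := Finset.powersetCard_nonempty.mpr hr
  obtain ⟨R₀, hR₀, hmin⟩ := Finset.exists_min_image (D.powersetCard r) (fun R => ∑ i ∈ R, y i) hP
  rw [mem_powersetCard] at hR₀
  refine ⟨R₀, hR₀.1, hR₀.2, ?_⟩
  -- double counting identity
  have key : ∑ R ∈ D.powersetCard r, ∑ i ∈ R, y i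
      = ((D.card - 1).choose (r - 1) : ℝ) * ∑ i ∈ D, y i := by
    have h1 : ∀ R ∈ D.powersetCard r, ∑ i ∈ R, y i = ∑ i ∈ D, if i ∈ R then y i else 0 := by
      intro R hR
      rw [mem_powersetCard] at hR
      rw [Finset.sum_ite_mem]
      rw [Finset.inter_eq_right.mpr hR.1]
    rw [Finset.sum_congr rfl h1, Finset.sum_comm]
    rw [Finset.mul_sum]
    apply Finset.sum_congr rfl
    intro i hi
    rw [← Finset.sum_filter, Finset.sum_const, count_powersetCard D r hpos hi, nsmul_eq_mul]
  have hsum : ((D.card.choose r : ℝ)) * ∑ i ∈ R₀, y i ≤ ∑ R ∈ D.powersetCard r, ∑ i ∈ R, y i := by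
    have := Finset.card_nsmul_le_sum (D.powersetCard r) (fun R => ∑ i ∈ R, y i)
      (∑ i ∈ R₀, y i) hmin
    rwa [Finset.card_powersetCard, nsmul_eq_mul] at this
  rw [key] at hsum
  -- now  C(d,r) * s₀ ≤ C(d-1,r-1) * Y ; multiply by d, use d*C(d-1,r-1) = r*C(d,r)
  have hid : D.card * (D.card - 1).choose (r - 1) = r * D.card.choose r := by
    have hd : 1 ≤ D.card := le_trans hpos hr
    have h1 : D.card - 1 + 1 = D.card := by omega
    have h2 : r - 1 + 1 = r := by omega
    calc D.card * (D.card-1).choose (r-1)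
        = (D.card - 1).succ * (D.card - 1).choose (r-1) := by
          rw [Nat.succ_eq_add_one, h1]
      _ = (D.card - 1).succ.choose (r-1).succ * (r-1).succ := Nat.add_one_mul_choose_eq _ _
      _ = r * D.card.choose r := by
          rw [Nat.succ_eq_add_one, Nat.succ_eq_add_one, h1, h2]; ring
  have hcpos : (0:ℝ) < (D.card.choose r : ℝ) := by
    exact_mod_cast Nat.choose_pos hr
  have := mul_le_mul_of_nonneg_left hsum (by positivity : (0:ℝ) ≤ (D.card : ℝ))
  have hidR : (D.card : ℝ) * ((D.card - 1).choose (r - 1) : ℝ) = (r : ℝ) * (D.card.choose r : ℝ) := by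
    exact_mod_cast congrArg (Nat.cast : ℕ → ℝ) hid
  have h2 : (D.card.choose r : ℝ) * ((D.card:ℝ) * ∑ i ∈ R₀, y i)
      ≤ (D.card.choose r : ℝ) * ((r:ℝ) * ∑ i ∈ D, y i) := by
    calc (D.card.choose r : ℝ) * ((D.card:ℝ) * ∑ i ∈ R₀, y i)
        = (D.card:ℝ) * ((D.card.choose r : ℝ) * ∑ i ∈ R₀, y i) := by ring
      _ ≤ (D.card:ℝ) * (((D.card - 1).choose (r - 1) : ℝ) * ∑ i ∈ D, y i) := this
      _ = ((D.card:ℝ) * ((D.card - 1).choose (r - 1) : ℝ)) * ∑ i ∈ D, y i := by ring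
      _ = ((r:ℝ) * (D.card.choose r : ℝ)) * ∑ i ∈ D, y i := by rw [hidR]
      _ = (D.card.choose r : ℝ) * ((r:ℝ) * ∑ i ∈ D, y i) := by ring
  exact le_of_mul_le_mul_left h2 hcpos
open Finset

lemma polymatroid_aux {E : Type*} [Fintype E] [DecidableEq E] :
    ∀ n : ℕ, ∀ G : Finset E, G.card ≤ n → ∀ f : Finset E → ℝ,
    f ∅ = 0 → (∀ A B : Finset E, A ⊆ B → f A ≤ f B) →
    (∀ A B : Finset E, f (A ∪ B) + f (A ∩ B) ≤ f A + f B) →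
    ∃ u : E → ℝ,
      (∀ i, 0 ≤ u i) ∧
      (∀ i, i ∉ G → u i = 0) ∧
      (∀ S : Finset E, S ⊆ G → ∑ i ∈ S, u i ≤ f S) ∧
      (∑ i ∈ G, u i = f G) ∧
      (∀ lb : ℝ, (∀ S : Finset E, S ⊆ G → S.Nonempty → lb * S.card ≤ f S) →
        ∀ i ∈ G, lb ≤ u i) ∧
      (∀ k : ℕ, 1 ≤ k → k ≤ G.card →
        ∃ A B : Finset E, ∃ lam : ℝ,
          A ⊆ B ∧ B ⊆ G ∧ A.card < k ∧ k ≤ B.card ∧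
          (∀ i ∈ A, u i ≤ lam) ∧
          (∀ i ∈ G, i ∉ A → lam ≤ u i) ∧
          (∀ i ∈ B, i ∉ A → u i = lam) ∧
          (∑ i ∈ A, u i = f A) ∧ (∑ i ∈ B, u i = f B)) := by
  intro n
  induction n with
  | zero =>
    intro G hG f hf0 hmono hsub
    have hGe : G = ∅ := Finset.card_eq_zero.mp (Nat.le_zero.mp hG)
    subst hGe
    refine ⟨fun _ => 0, fun _ => le_refl 0, fun _ _ => rfl, ?_, by simp [hf0], ?_, ?_⟩
    · intro S hS
      rw [Finset.subset_empty.mp hS]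
      simp [hf0]
    · intro lb _ i hi
      exact absurd hi (Finset.notMem_empty i)
    · intro k hk1 hk2
      simp at hk2
      omega
  | succ n ih =>
    intro G hG f hf0 hmono hsub
    rcases Finset.eq_empty_or_nonempty G with hGe | hGne
    · subst hGe
      refine ⟨fun _ => 0, fun _ => le_refl 0, fun _ _ => rfl, ?_, by simp [hf0], ?_, ?_⟩
      · intro S hS
        rw [Finset.subset_empty.mp hS]
        simp [hf0]
      · intro lb _ i hi
        exact absurd hi (Finset.notMem_empty i)
      · intro k hk1 hk2
        simp at hk2
        omega
    -- main case
    have hFne : (G.powerset.filter (fun S => S.Nonempty)).Nonempty :=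
      ⟨G, Finset.mem_filter.mpr ⟨Finset.mem_powerset_self G, hGne⟩⟩
    obtain ⟨T, hTF, hTmin⟩ := Finset.exists_min_image _ (fun S => f S / S.card) hFne
    rw [Finset.mem_filter, Finset.mem_powerset] at hTF
    obtain ⟨hTG, hTne⟩ := hTF
    have hTcard : 0 < T.card := Finset.card_pos.mpr hTne
    have hTcardR : (0:ℝ) < (T.card : ℝ) := by exact_mod_cast hTcard
    set lam := f T / T.card with hlamdef
    have hfT : f T = lam * T.card := by
      rw [hlamdef, div_mul_cancel₀ _ (ne_of_gt hTcardR)]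
    have hmin : ∀ S : Finset E, S ⊆ G → S.Nonempty → lam * S.card ≤ f S := by
      intro S hSG hSne
      have hSc : (0:ℝ) < (S.card : ℝ) := by
        exact_mod_cast Finset.card_pos.mpr hSne
      have := hTmin S (Finset.mem_filter.mpr ⟨Finset.mem_powerset.mpr hSG, hSne⟩)
      rw [div_le_div_iff₀ hTcardR hSc] at this
      calc lam * S.card = f T * S.card / T.card := by rw [hfT, mul_right_comm, mul_div_cancel_right₀ _ (ne_of_gt hTcardR)]
        _ ≤ f S := by
            rw [div_le_iff₀ hTcardR]
            linarith
    have hlam0 : 0 ≤ lam := by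
      apply div_nonneg _ (le_of_lt hTcardR)
      rw [← hf0]
      exact hmono ∅ T (Finset.empty_subset T)
    set G' := G \ T with hG'def
    have hG'card : G'.card ≤ n := by
      rw [hG'def, Finset.card_sdiff_of_subset hTG]
      omega
    set f' : Finset E → ℝ := fun A => f (A ∪ T) - f T with hf'def
    have hf'0 : f' ∅ = 0 := by simp [hf'def]
    have hf'mono : ∀ A B : Finset E, A ⊆ B → f' A ≤ f' B := by
      intro A B hAB
      simp only [hf'def]
      have := hmono (A ∪ T) (B ∪ T) (Finset.union_subset_union_left hAB)
      linarith
    have hf'sub : ∀ A B : Finset E, f' (A ∪ B) + f' (A ∩ B) ≤ f' A + f' B := by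
      intro A B
      simp only [hf'def]
      have h1 : (A ∪ T) ∪ (B ∪ T) = (A ∪ B) ∪ T := by
        rw [Finset.union_union_union_comm, Finset.union_self]
      have h2 : (A ∪ T) ∩ (B ∪ T) = (A ∩ B) ∪ T := by
        rw [Finset.inter_union_distrib_right]
      have := hsub (A ∪ T) (B ∪ T)
      rw [h1, h2] at this
      linarith
    obtain ⟨u', hu'0, hu'supp, hu'le, hu'sum, hu'lb, hu'k⟩ := ih G' hG'card f' hf'0 hf'mono hf'sub
    set u : E → ℝ := fun i => if i ∈ T then lam else u' i with hudef
    have hdisj : Disjoint T G' := Finset.disjoint_sdiff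
    have huT : ∀ i ∈ T, u i = lam := by intro i hi; simp [hudef, hi]
    have huG' : ∀ i ∉ T, u i = u' i := by intro i hi; simp [hudef, hi]
    have hsumT : ∀ W : Finset E, W ⊆ T → ∑ i ∈ W, u i = lam * W.card := by
      intro W hW
      rw [Finset.sum_congr rfl (fun i hi => huT i (hW hi)), Finset.sum_const, nsmul_eq_mul,
        mul_comm]
    have hsumG' : ∀ W : Finset E, Disjoint W T → ∑ i ∈ W, u i = ∑ i ∈ W, u' i :=
      fun W hW => Finset.sum_congr rfl (fun i hi => huG' i (Finset.disjoint_left.mp hW hi))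
    -- key sum split for S ⊆ G
    have hsplit : ∀ S : Finset E, ∑ i ∈ S, u i = lam * (S ∩ T).card + ∑ i ∈ S \ T, u' i := by
      intro S
      rw [← Finset.sum_inter_add_sum_sdiff S T u, hsumT (S ∩ T) Finset.inter_subset_right,
        hsumG' (S \ T) Finset.sdiff_disjoint]
    have hu0 : ∀ i, 0 ≤ u i := by
      intro i
      by_cases hi : i ∈ T
      · rw [huT i hi]; exact hlam0
      · rw [huG' i hi]; exact hu'0 i
    have husupp : ∀ i, i ∉ G → u i = 0 := by
      intro i hi
      have hiT : i ∉ T := fun h => hi (hTG h)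
      rw [huG' i hiT]
      exact hu'supp i (fun h => hi (Finset.sdiff_subset h))
    have hule : ∀ S : Finset E, S ⊆ G → ∑ i ∈ S, u i ≤ f S := by
      intro S hSG
      rw [hsplit S]
      have h1 : ∑ i ∈ S \ T, u' i ≤ f' (S \ T) :=
        hu'le (S \ T) (Finset.sdiff_subset_sdiff hSG (le_refl T))
      have h2 : f' (S \ T) = f (S ∪ T) - f T := by
        rw [hf'def]
        simp only []
        rw [Finset.sdiff_union_self_eq_union]
      have h3 : lam * ((S ∩ T).card : ℝ) ≤ f (S ∩ T) := by
        rcases Finset.eq_empty_or_nonempty (S ∩ T) with he | hne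
        · rw [he, hf0]; simp
        · exact hmin (S ∩ T) (Finset.inter_subset_left.trans hSG) hne
      have h4 := hsub S T
      linarith
    have husum : ∑ i ∈ G, u i = f G := by
      rw [hsplit G]
      have h1 : G ∩ T = T := Finset.inter_eq_right.mpr hTG
      have h2 : G \ T = G' := rfl
      have h3 : G' ∪ T = G := Finset.sdiff_union_of_subset hTG
      rw [h1, h2, hu'sum, hf'def]
      simp only []
      rw [h3]
      linarith [hfT]
    have hulb : ∀ lb : ℝ, (∀ S : Finset E, S ⊆ G → S.Nonempty → lb * S.card ≤ f S) →
        ∀ i ∈ G, lb ≤ u i := by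
      intro lb hlb i hiG
      have hlblam : lb ≤ lam := by
        have := hlb T hTG hTne
        rw [hfT] at this
        exact le_of_mul_le_mul_right this hTcardR
      by_cases hi : i ∈ T
      · rw [huT i hi]; exact hlblam
      · rw [huG' i hi]
        apply hu'lb lb _ i (Finset.mem_sdiff.mpr ⟨hiG, hi⟩)
        intro S hSG' hSne
        have hSdisj : Disjoint S T :=
          Finset.disjoint_of_subset_left hSG' Finset.sdiff_disjoint
        have hcard : ((S ∪ T).card : ℝ) = (S.card : ℝ) + (T.card : ℝ) := by
          rw [Finset.card_union_of_disjoint hSdisj]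
          push_cast
          ring
        have h1 : lam * ((S ∪ T).card : ℝ) ≤ f (S ∪ T) :=
          hmin (S ∪ T) (Finset.union_subset (hSG'.trans Finset.sdiff_subset) hTG)
            (Finset.Nonempty.mono Finset.subset_union_right hTne)
        have h2 : f' S = f (S ∪ T) - f T := rfl
        have hS0 : (0:ℝ) ≤ (S.card : ℝ) := Nat.cast_nonneg _
        rw [h2]
        rw [hcard] at h1
        nlinarith [hfT, hlblam]
    have hulam : ∀ i ∈ G, lam ≤ u i := hulb lam hmin
    refine ⟨u, hu0, husupp, hule, husum, hulb, ?_⟩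
    intro k hk1 hkG
    by_cases hkt : k ≤ T.card
    · refine ⟨∅, T, lam, Finset.empty_subset T, hTG, by simp; omega, hkt, ?_, ?_, ?_, ?_, ?_⟩
      · intro i hi; exact absurd hi (Finset.notMem_empty i)
      · intro i hi _; exact hulam i hi
      · intro i hi _; exact huT i hi
      · simp [hf0]
      · rw [hsumT T (le_refl T), hfT]
    · push_neg at hkt
      have hkG' : k - T.card ≤ G'.card := by
        rw [hG'def, Finset.card_sdiff_of_subset hTG]
        omega
      obtain ⟨A', B', lam', hAB', hB'G', hA'k, hkB', hA'le, hG'ge, hBA'eq, hsumA', hsumB'⟩ :=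
        hu'k (k - T.card) (by omega) hkG'
      have hA'G' : A' ⊆ G' := hAB'.trans hB'G'
      have hdisjA : Disjoint A' T := Finset.disjoint_of_subset_left hA'G' Finset.sdiff_disjoint
      have hdisjB : Disjoint B' T := Finset.disjoint_of_subset_left hB'G' Finset.sdiff_disjoint
      have hlamlam' : lam ≤ lam' := by
        have hBA'ne : (B' \ A').Nonempty := by
          rw [Finset.sdiff_nonempty]
          intro h
          have := Finset.card_le_card h
          omega
        obtain ⟨i₀, hi₀⟩ := hBA'ne
        rw [Finset.mem_sdiff] at hi₀
        have hi₀G' : i₀ ∈ G' := hB'G' hi₀.1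
        have hi₀T : i₀ ∉ T := (Finset.mem_sdiff.mp hi₀G').2
        have h1 : u i₀ = u' i₀ := huG' i₀ hi₀T
        have h2 : u' i₀ = lam' := hBA'eq i₀ hi₀.1 hi₀.2
        have h3 : lam ≤ u i₀ := hulam i₀ (Finset.sdiff_subset hi₀G')
        linarith
      refine ⟨A' ∪ T, B' ∪ T, lam', Finset.union_subset_union_left hAB',
        Finset.union_subset (hB'G'.trans Finset.sdiff_subset) hTG, ?_, ?_, ?_, ?_, ?_, ?_, ?_⟩
      · rw [Finset.card_union_of_disjoint hdisjA]
        omega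
      · rw [Finset.card_union_of_disjoint hdisjB]
        omega
      · intro i hi
        rcases Finset.mem_union.mp hi with hiA | hiT
        · rw [huG' i (Finset.disjoint_left.mp hdisjA hiA)]
          exact hA'le i hiA
        · rw [huT i hiT]
          exact hlamlam'
      · intro i hiG hiA
        have hiT : i ∉ T := fun h => hiA (Finset.mem_union_right A' h)
        have hiA' : i ∉ A' := fun h => hiA (Finset.mem_union_left T h)
        rw [huG' i hiT]
        exact hG'ge i (Finset.mem_sdiff.mpr ⟨hiG, hiT⟩) hiA'
      · intro i hiB hiA
        have hiT : i ∉ T := fun h => hiA (Finset.mem_union_right A' h)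
        have hiA' : i ∉ A' := fun h => hiA (Finset.mem_union_left T h)
        have hiB' : i ∈ B' := by
          rcases Finset.mem_union.mp hiB with h | h
          · exact h
          · exact absurd h hiT
        rw [huG' i hiT]
        exact hBA'eq i hiB' hiA'
      · rw [Finset.sum_union hdisjA, hsumT T (le_refl T), hsumG' A' hdisjA, hsumA']
        have : f' A' = f (A' ∪ T) - f T := rfl
        rw [this]
        linarith [hfT]
      · rw [Finset.sum_union hdisjB, hsumT T (le_refl T), hsumG' B' hdisjB, hsumB']
        have : f' B' = f (B' ∪ T) - f T := rfl
        rw [this]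
        linarith [hfT]
lemma Qk_le_sum {E : Type*} [Fintype E] (x : E → ℝ) (k : ℕ) (S : Finset E)
    (hS : S.card = k) : Qk x k ≤ ∑ i ∈ S, x i := by
  have hsub : {s : ℝ | ∃ S : Finset E, S.card = k ∧ s = ∑ i ∈ S, x i} ⊆
      Set.range (fun S : Finset E => ∑ i ∈ S, x i) := by
    rintro s ⟨S', _, rfl⟩
    exact ⟨S', rfl⟩
  have hbdd : BddBelow {s : ℝ | ∃ S : Finset E, S.card = k ∧ s = ∑ i ∈ S, x i} :=
    ((Set.finite_range _).subset hsub).bddBelow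
  exact csInf_le hbdd ⟨S, hS, rfl⟩

lemma le_Qk {E : Type*} [Fintype E] (x : E → ℝ) (k : ℕ) (hk : k ≤ Fintype.card E) (b : ℝ)
    (h : ∀ S : Finset E, S.card = k → b ≤ ∑ i ∈ S, x i) : b ≤ Qk x k := by
  apply le_csInf
  · obtain ⟨S, _, hS⟩ := Finset.exists_subset_card_eq (s := (univ : Finset E)) (n := k)
      (by simpa [Finset.card_univ] using hk)
    exact ⟨_, S, hS, rfl⟩
  · rintro s ⟨S, hS, rfl⟩
    exact h S hS

theorem stmt_4 {E : Type*} [Fintype E] [DecidableEq E]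
    (f : Finset E → ℝ)
    (hf0 : f ∅ = 0)
    (hfmono : ∀ A B : Finset E, A ⊆ B → f A ≤ f B)
    (hfsub : ∀ A B : Finset E, f (A ∪ B) + f (A ∩ B) ≤ f A + f B) :
    ∃ u ∈ baseB f, ∀ y ∈ indepP f, ∀ k : ℕ,
      1 ≤ k → k ≤ Fintype.card E → Qk y k ≤ Qk u k := by
  obtain ⟨u, hu0, -, hule, husum, -, huk⟩ :=
    polymatroid_aux (Fintype.card E) (univ : Finset E) (by rw [Finset.card_univ]) f
      hf0 hfmono hfsub
  have humem : u ∈ indepP f := ⟨hu0, fun S => hule S (Finset.subset_univ S)⟩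
  refine ⟨u, ⟨humem, husum⟩, ?_⟩
  intro y hy k hk1 hk2
  obtain ⟨A, B, lam, hAB, -, hAk, hkB, hAle, hge, hBeq, hsumA, hsumB⟩ :=
    huk k hk1 (by rwa [Finset.card_univ])
  have hdisjD : Disjoint A (B \ A) := Finset.disjoint_sdiff
  have hDcard : (B \ A).card = B.card - A.card := Finset.card_sdiff_of_subset hAB
  have hrd : k - A.card ≤ (B \ A).card := by omega
  obtain ⟨R, hRD, hRc, havg⟩ := exists_avg_subset (B \ A) (k - A.card) hrd y
  have hdisjAR : Disjoint A R := Finset.disjoint_of_subset_right hRD hdisjD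
  -- real abbreviations
  set dR : ℝ := ((B \ A).card : ℝ) with hdRdef
  set rR : ℝ := ((k - A.card : ℕ) : ℝ) with hrRdef
  have hrR1 : (1:ℝ) ≤ rR := by
    rw [hrRdef]
    exact_mod_cast Nat.one_le_iff_ne_zero.mpr (by omega)
  have hrled : rR ≤ dR := by
    rw [hrRdef, hdRdef]
    exact_mod_cast hrd
  have hdpos : (0:ℝ) < dR := lt_of_lt_of_le (by linarith) hrled
  have hrcast : rR = (k : ℝ) - (A.card : ℝ) := by
    rw [hrRdef]
    exact_mod_cast Nat.cast_sub (le_of_lt hAk)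
  -- the value u takes on B \ A gives  f B = f A + lam * dR
  have hsumD : ∑ i ∈ B \ A, u i = lam * dR := by
    rw [Finset.sum_congr rfl (fun i hi => hBeq i (Finset.mem_sdiff.mp hi).1
      (Finset.mem_sdiff.mp hi).2), Finset.sum_const, nsmul_eq_mul, mul_comm, hdRdef]
  have hBsplit : ∑ i ∈ B, u i = ∑ i ∈ A, u i + ∑ i ∈ B \ A, u i := by
    rw [← Finset.sum_inter_add_sum_sdiff B A u, Finset.inter_eq_right.mpr hAB]
  have hfBA : f B = f A + lam * dR := by
    rw [← hsumA, ← hsumB, hBsplit, hsumD]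
  -- upper bound on Qk y k
  have hyA : ∑ i ∈ A, y i ≤ f A := hy.2 A
  have hyB : ∑ i ∈ B, y i ≤ f B := hy.2 B
  have hyBsplit : ∑ i ∈ B, y i = ∑ i ∈ A, y i + ∑ i ∈ B \ A, y i := by
    rw [← Finset.sum_inter_add_sum_sdiff B A y, Finset.inter_eq_right.mpr hAB]
  have hyBD : ∑ i ∈ A, y i + ∑ i ∈ B \ A, y i ≤ f A + lam * dR := by
    rw [← hyBsplit, ← hfBA]
    exact hyB
  have hkey : dR * (∑ i ∈ A, y i + ∑ i ∈ R, y i) ≤ dR * (f A + rR * lam) := by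
    nlinarith [havg, mul_nonneg (by linarith : (0:ℝ) ≤ rR)
        (by linarith : (0:ℝ) ≤ (f A + lam * dR) - (∑ i ∈ A, y i + ∑ i ∈ B \ A, y i)),
      mul_nonneg (by linarith : (0:ℝ) ≤ dR - rR)
        (by linarith : (0:ℝ) ≤ f A - ∑ i ∈ A, y i)]
  have hylek : ∑ i ∈ A, y i + ∑ i ∈ R, y i ≤ f A + rR * lam :=
    le_of_mul_le_mul_left hkey hdpos
  have hcardAR : (A ∪ R).card = k := by
    rw [Finset.card_union_of_disjoint hdisjAR, hRc]
    omega
  have hQy : Qk y k ≤ f A + rR * lam := by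
    calc Qk y k ≤ ∑ i ∈ A ∪ R, y i := Qk_le_sum y k (A ∪ R) hcardAR
      _ = ∑ i ∈ A, y i + ∑ i ∈ R, y i := Finset.sum_union hdisjAR
      _ ≤ f A + rR * lam := hylek
  -- lower bound on Qk u k
  have hQu : f A + rR * lam ≤ Qk u k := by
    apply le_Qk u k hk2
    intro S hS
    have e1 : ∑ i ∈ S, u i = ∑ i ∈ S ∩ A, u i + ∑ i ∈ S \ A, u i :=
      (Finset.sum_inter_add_sum_sdiff S A u).symm
    have e2 : ∑ i ∈ A, u i = ∑ i ∈ S ∩ A, u i + ∑ i ∈ A \ S, u i := by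
      rw [← Finset.sum_inter_add_sum_sdiff A S u, Finset.inter_comm]
    have h1 : ∑ i ∈ A \ S, u i ≤ ((A \ S).card : ℝ) * lam := by
      have := Finset.sum_le_card_nsmul (A \ S) u lam
        (fun i hi => hAle i (Finset.mem_sdiff.mp hi).1)
      rwa [nsmul_eq_mul] at this
    have h2 : ((S \ A).card : ℝ) * lam ≤ ∑ i ∈ S \ A, u i := by
      have := Finset.card_nsmul_le_sum (S \ A) u lam
        (fun i hi => hge i (Finset.mem_univ i) (Finset.mem_sdiff.mp hi).2)
      rwa [nsmul_eq_mul] at this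
    have hc1 : ((A \ S).card : ℝ) + ((A ∩ S).card : ℝ) = (A.card : ℝ) := by
      exact_mod_cast Finset.card_sdiff_add_card_inter A S
    have hc2 : ((S \ A).card : ℝ) + ((S ∩ A).card : ℝ) = (k : ℝ) := by
      rw [← hS]
      exact_mod_cast Finset.card_sdiff_add_card_inter S A
    have hc3 : ((A ∩ S).card : ℝ) = ((S ∩ A).card : ℝ) := by
      rw [Finset.inter_comm]
    have hdiff : ((S \ A).card : ℝ) - ((A \ S).card : ℝ) = (k : ℝ) - (A.card : ℝ) := by
      linarith
    have hcl : ((S \ A).card : ℝ) * lam - ((A \ S).card : ℝ) * lam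
        = ((k : ℝ) - (A.card : ℝ)) * lam := by
      rw [← sub_mul, hdiff]
    rw [e1, hrcast]
    linarith [h1, h2, e2, hsumA, hcl]
  linarith
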